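/- Let p be a prime, k a field of characteristic p, R = k⟦u⟧ the power series ring over k, and Ω a field of characteristic p containing the Laurent series field k((u)) as a subfield. Let M be a finitely generated R-module, set V = M ⊗_{R} Ω (an Ω-vector space), and let ψ : V → V be any Frobenius-semilinear map, i.e., ψ is additive and ψ(a·v) = aᵖ·ψ(v) for all a ∈ Ω, v ∈ V. Then the fixed points form a finite-dimensional F_p-vector space with dim_{F_p} V^{ψ=1} ≤ dim_k (M/uM). -/

import Mathlib

open Pointwise

/-- Any root of `X^p - X` in a `ZMod p`-algebra which is a field lies in the prime field. -/
lemma exists_zmod_eq_of_pow_eq {p : ℕ} [Fact p.Prime] {Ω : Type*} [Field Ω]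
    [Algebra (ZMod p) Ω] {a : Ω} (ha : a ^ p = a) :
    ∃ z : ZMod p, algebraMap (ZMod p) Ω z = a := by
  classical
  by_contra hcon
  push_neg at hcon
  set Q : Polynomial Ω := Polynomial.X ^ p - Polynomial.X with hQ
  have hplt : 1 < p := (Fact.out : p.Prime).one_lt
  have hdeg : Q.natDegree = p := by
    have h1 : (Polynomial.X : Polynomial Ω).natDegree <
        (Polynomial.X ^ p : Polynomial Ω).natDegree := by
      simpa [Polynomial.natDegree_X_pow, Polynomial.natDegree_X] using hplt
    simpa [Polynomial.natDegree_X_pow] using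
      Polynomial.natDegree_sub_eq_left_of_natDegree_lt h1
  have hQ0 : Q ≠ 0 := by
    intro h
    rw [h, Polynomial.natDegree_zero] at hdeg
    omega
  set Z : Finset Ω := insert a (Finset.image (algebraMap (ZMod p) Ω) Finset.univ) with hZ
  have hsub : Z.val ⊆ Q.roots := by
    intro x hx
    have hx' : x ∈ Z := hx
    rw [Polynomial.mem_roots hQ0]
    rcases Finset.mem_insert.mp hx' with rfl | hx2
    · simp [Polynomial.IsRoot, hQ, ha]
    · obtain ⟨z, _, rfl⟩ := Finset.mem_image.mp hx2
      have hz : (algebraMap (ZMod p) Ω z) ^ p = algebraMap (ZMod p) Ω z := by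
        rw [← map_pow, ZMod.pow_card]
      simp [Polynomial.IsRoot, hQ, hz]
  have hcard := Polynomial.card_le_degree_of_subset_roots hsub
  have hZcard : Z.card = p + 1 := by
    rw [hZ, Finset.card_insert_of_notMem, Finset.card_image_of_injective _
      (algebraMap (ZMod p) Ω).injective, Finset.card_univ, ZMod.card]
    intro hmem
    obtain ⟨z, _, hz⟩ := Finset.mem_image.mp hmem
    exact hcon z hz
  rw [hZcard, hdeg] at hcard
  omega

/-- The key semilinear-algebra lemma: a family of `ψ`-fixed vectors which is linearly
independent with coefficients that are fixed by `x ↦ x ^ p` is linearly independent over `Ω`. -/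
lemma frobenius_fixed_key {p : ℕ} [Fact p.Prime] {Ω V ι : Type*} [Field Ω]
    [AddCommGroup V] [Module Ω V] [DecidableEq ι]
    (ψ : V → V) (hadd : ∀ x y, ψ (x + y) = ψ x + ψ y)
    (hsmul : ∀ (a : Ω) (v : V), ψ (a • v) = a ^ p • ψ v)
    (w : ι → V) (hfix : ∀ i, ψ (w i) = w i) (s : Finset ι)
    (hpf : ∀ g : ι → Ω, (∀ i ∈ s, g i ^ p = g i) → ∑ i ∈ s, g i • w i = 0 →
      ∀ i ∈ s, g i = 0) :
    ∀ g : ι → Ω, ∑ i ∈ s, g i • w i = 0 → ∀ i ∈ s, g i = 0 := by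
  classical
  induction s using Finset.strongInduction with
  | _ s ih =>
  intro g hrel i₀ hi₀
  by_contra hne
  set h : ι → Ω := fun i => (g i₀)⁻¹ * g i with hh
  have hrel1 : ∑ i ∈ s, h i • w i = 0 := by
    have : ∑ i ∈ s, h i • w i = (g i₀)⁻¹ • ∑ i ∈ s, g i • w i := by
      rw [Finset.smul_sum]
      exact Finset.sum_congr rfl fun i _ => (smul_smul _ _ _).symm
    rw [this, hrel, smul_zero]
  have hh0 : h i₀ = 1 := inv_mul_cancel₀ hne
  let Ψ : V →+ V := AddMonoidHom.mk' ψ hadd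
  have hΨ : ∀ v, Ψ v = ψ v := fun _ => rfl
  have hrel2 : ∑ i ∈ s, (h i ^ p) • w i = 0 := by
    have h1 : ψ (∑ i ∈ s, h i • w i) = ∑ i ∈ s, (h i ^ p) • w i := by
      rw [← hΨ, map_sum]
      refine Finset.sum_congr rfl fun i _ => ?_
      rw [hΨ, hsmul, hfix]
    rw [← h1, hrel1, ← hΨ, map_zero]
  have hrel3 : ∑ i ∈ s.erase i₀, (h i ^ p - h i) • w i = 0 := by
    have hsplit : ∑ i ∈ s, (h i ^ p - h i) • w i = 0 := by
      have : ∑ i ∈ s, (h i ^ p - h i) • w i =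
          ∑ i ∈ s, (h i ^ p) • w i - ∑ i ∈ s, h i • w i := by
        rw [← Finset.sum_sub_distrib]
        exact Finset.sum_congr rfl fun i _ => sub_smul _ _ _
      rw [this, hrel2, hrel1, sub_zero]
    have heq := Finset.sum_erase_add s (fun i => (h i ^ p - h i) • w i) hi₀
    rw [hsplit] at heq
    have hcoef : h i₀ ^ p - h i₀ = 0 := by rw [hh0, one_pow, sub_self]
    simp only [hcoef, zero_smul, add_zero] at heq
    exact heq
  have hpf' : ∀ g' : ι → Ω, (∀ i ∈ s.erase i₀, g' i ^ p = g' i) →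
      ∑ i ∈ s.erase i₀, g' i • w i = 0 → ∀ i ∈ s.erase i₀, g' i = 0 := by
    intro g' hg' hrel' j hj
    set g'' : ι → Ω := fun i => if i = i₀ then 0 else g' i with hg''
    have h1 : ∀ i ∈ s, g'' i ^ p = g'' i := by
      intro i hi
      by_cases hii : i = i₀
      · simp [hg'', hii, zero_pow (Fact.out : p.Prime).ne_zero]
      · simpa [hg'', hii] using hg' i (Finset.mem_erase.mpr ⟨hii, hi⟩)
    have h2 : ∑ i ∈ s, g'' i • w i = 0 := by
      rw [← Finset.sum_erase_add s _ hi₀]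
      have : ∑ i ∈ s.erase i₀, g'' i • w i = ∑ i ∈ s.erase i₀, g' i • w i :=
        Finset.sum_congr rfl fun i hi => by simp [hg'', (Finset.mem_erase.mp hi).1]
      rw [this, hrel']
      simp [hg'']
    have h3 := hpf g'' h1 h2 j (Finset.mem_of_mem_erase hj)
    simpa [hg'', (Finset.mem_erase.mp hj).1] using h3
  have hind := ih (s.erase i₀) (Finset.erase_ssubset hi₀) hpf'
    (fun i => h i ^ p - h i) hrel3
  have hfixh : ∀ i ∈ s, h i ^ p = h i := by
    intro i hi
    by_cases hii : i = i₀
    · rw [hii, hh0, one_pow]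
    · exact sub_eq_zero.mp (hind i (Finset.mem_erase.mpr ⟨hii, hi⟩))
  have := hpf h hfixh hrel1 i₀ hi₀
  rw [hh0] at this
  exact one_ne_zero this


open Pointwise

/-- The fixed points `V^{ψ=1}` of a Frobenius-semilinear map `ψ` on a vector space `V` over a
field `Ω` of characteristic `p`, as a `ZMod p`-submodule of `V`. -/
def frobeniusFixedPoints
    {p : ℕ} [Fact p.Prime]
    {Ω : Type*} [Field Ω] [CharP Ω p] [Algebra (ZMod p) Ω]
    {V : Type*} [AddCommGroup V] [Module Ω V]
    [Module (ZMod p) V] [IsScalarTower (ZMod p) Ω V]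
    (ψ : V → V)
    (hadd : ∀ x y : V, ψ (x + y) = ψ x + ψ y)
    (hsmul : ∀ (a : Ω) (v : V), ψ (a • v) = a ^ p • ψ v) :
    Submodule (ZMod p) V where
  carrier := {v | ψ v = v}
  add_mem' := by
    intro a b ha hb
    simp only [Set.mem_setOf_eq] at *
    rw [hadd, ha, hb]
  zero_mem' := by
    have h0 : ψ 0 = ψ ((0 : Ω) • (0 : V)) := by rw [zero_smul]
    have h1 : ψ ((0 : Ω) • (0 : V)) = (0 : Ω) ^ p • ψ 0 := hsmul 0 0
    simp only [Set.mem_setOf_eq]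
    rw [h0, h1, zero_pow (Fact.out : p.Prime).ne_zero, zero_smul]
  smul_mem' := by
    intro z v hv
    simp only [Set.mem_setOf_eq] at *
    have h1 : z • v = (algebraMap (ZMod p) Ω z) • v :=
      (IsScalarTower.algebraMap_smul Ω z v).symm
    rw [h1, hsmul, ← map_pow, ZMod.pow_card, hv]

set_option maxHeartbeats 1000000 in
set_option synthInstance.maxHeartbeats 400000 in
/-- Let `p` be a prime, `k` a field of characteristic `p`, `R = k⟦u⟧`, and `Ω`
a field of characteristic `p` containing the Laurent series field `k((u))` as a subfield.  Let
`M` be a finitely generated `R`-module, `V = Ω ⊗_R M`, and `ψ : V → V` any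
Frobenius-semilinear map.  Then the fixed points `V^{ψ=1}` form a finite-dimensional
`𝔽ₚ`-vector space with `dim_{𝔽ₚ} V^{ψ=1} ≤ dim_k (M/uM)`. -/
theorem finrank_frobenius_fixed_points_le
    {p : ℕ} [Fact p.Prime]
    {k : Type*} [Field k] [CharP k p]
    {Ω : Type*} [Field Ω] [CharP Ω p] [Algebra (ZMod p) Ω]
    [Algebra (LaurentSeries k) Ω]
    [Algebra (PowerSeries k) Ω] [IsScalarTower (PowerSeries k) (LaurentSeries k) Ω]
    {M : Type*} [AddCommGroup M] [Module (PowerSeries k) M]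
    [Module k M] [IsScalarTower k (PowerSeries k) M]
    [Module.Finite (PowerSeries k) M]
    [Module (ZMod p) (TensorProduct (PowerSeries k) Ω M)]
    [IsScalarTower (ZMod p) Ω (TensorProduct (PowerSeries k) Ω M)]
    (ψ : TensorProduct (PowerSeries k) Ω M → TensorProduct (PowerSeries k) Ω M)
    (hadd : ∀ x y, ψ (x + y) = ψ x + ψ y)
    (hsmul : ∀ (a : Ω) (v : TensorProduct (PowerSeries k) Ω M), ψ (a • v) = a ^ p • ψ v) :
    FiniteDimensional (ZMod p) (frobeniusFixedPoints (Ω := Ω) ψ hadd hsmul) ∧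
      Module.finrank (ZMod p) (frobeniusFixedPoints (Ω := Ω) ψ hadd hsmul) ≤
        Module.finrank k
          (M ⧸ ((PowerSeries.X : PowerSeries k) • ⊤ : Submodule (PowerSeries k) M)) := by

  classical
  -- Notation
  set N : Submodule (PowerSeries k) M :=
    ((PowerSeries.X : PowerSeries k) • ⊤ : Submodule (PowerSeries k) M) with hN
  -- membership of "constant-coefficient corrections" in N
  have hNker : ∀ (r : PowerSeries k) (m : M),
      (r - algebraMap k (PowerSeries k) (PowerSeries.constantCoeff r)) • m ∈ N := by
    intro r m
    have hdvd : (PowerSeries.X : PowerSeries k) ∣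
        (r - algebraMap k (PowerSeries k) (PowerSeries.constantCoeff r)) := by
      rw [PowerSeries.X_dvd_iff]
      simp [← PowerSeries.C_eq_algebraMap]
    obtain ⟨r', hr'⟩ := hdvd
    rw [hr', mul_smul]
    exact Submodule.smul_mem_pointwise_smul _ _ _ Submodule.mem_top
  -- generators of M over R
  obtain ⟨t, ht⟩ := (Module.Finite.fg_top : (⊤ : Submodule (PowerSeries k) M).FG)
  -- M ⧸ N is spanned over k by the images of t
  have hspanQ : Submodule.span k (N.mkQ '' ↑t) = ⊤ := by
    rw [eq_top_iff]
    rintro q -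
    obtain ⟨m, rfl⟩ := N.mkQ_surjective q
    have hm : m ∈ Submodule.span (PowerSeries k) (↑t : Set M) := by
      rw [ht]; trivial
    refine Submodule.span_induction ?_ ?_ ?_ ?_ hm
    · intro x hx
      exact Submodule.subset_span ⟨x, hx, rfl⟩
    · simp
    · intro x y _ _ hx hy
      rw [map_add]
      exact Submodule.add_mem _ hx hy
    · intro r x _ hx
      set c := PowerSeries.constantCoeff r with hc
      have hdecomp : r • x = (algebraMap k (PowerSeries k) c) • x +
          (r - algebraMap k (PowerSeries k) c) • x := by
        rw [← add_smul, add_sub_cancel]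
      rw [hdecomp, map_add]
      have h2 : N.mkQ ((r - algebraMap k (PowerSeries k) c) • x) = 0 := by
        rw [Submodule.mkQ_apply, Submodule.Quotient.mk_eq_zero]
        exact hNker r x
      have h1 : N.mkQ ((algebraMap k (PowerSeries k) c) • x) = c • N.mkQ x := by
        rw [IsScalarTower.algebraMap_smul, Submodule.mkQ_apply, Submodule.mkQ_apply,
          Submodule.Quotient.mk_smul]
      rw [h1, h2, add_zero]
      exact Submodule.smul_mem _ _ hx
  have hfinQ : Module.Finite k (M ⧸ N) :=
    ⟨⟨t.image N.mkQ, by rw [Finset.coe_image]; exact hspanQ⟩⟩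
  set d := Module.finrank k (M ⧸ N) with hd
  let b : Module.Basis (Fin d) k (M ⧸ N) := Module.finBasis k (M ⧸ N)
  choose b' hb' using fun i : Fin d => N.mkQ_surjective (b i)
  -- Nakayama: the lifts b' generate M over R
  have hXjac : Ideal.span {(PowerSeries.X : PowerSeries k)} ≤ Ideal.jacobson ⊥ := by
    rw [IsLocalRing.jacobson_eq_maximalIdeal ⊥ bot_ne_top,
      PowerSeries.maximalIdeal_eq_span_X]
  have hle : (⊤ : Submodule (PowerSeries k) M) ≤
      Submodule.span (PowerSeries k) (Set.range b') ⊔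
        (Ideal.span {(PowerSeries.X : PowerSeries k)}) • ⊤ := by
    rw [Submodule.ideal_span_singleton_smul]
    rintro m -
    set m' : M := ∑ i, algebraMap k (PowerSeries k) (b.repr (N.mkQ m) i) • b' i with hm'
    have hm'mem : m' ∈ Submodule.span (PowerSeries k) (Set.range b') :=
      Submodule.sum_mem _ fun i _ =>
        Submodule.smul_mem _ _ (Submodule.subset_span ⟨i, rfl⟩)
    have hmm' : m - m' ∈ N := by
      have hmk : N.mkQ m' = N.mkQ m := by
        rw [hm', map_sum]
        have : ∀ i : Fin d, N.mkQ (algebraMap k (PowerSeries k) (b.repr (N.mkQ m) i) • b' i)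
            = (b.repr (N.mkQ m) i) • b i := by
          intro i
          rw [IsScalarTower.algebraMap_smul, Submodule.mkQ_apply, Submodule.Quotient.mk_smul,
            ← Submodule.mkQ_apply, hb']
        rw [Finset.sum_congr rfl fun i _ => this i]
        exact b.sum_repr (N.mkQ m)
      have : N.mkQ (m - m') = 0 := by rw [map_sub, hmk, sub_self]
      rwa [Submodule.mkQ_apply, Submodule.Quotient.mk_eq_zero] at this
    have hsum : m = m' + (m - m') := by rw [add_sub_cancel]
    rw [hsum]
    exact Submodule.add_mem_sup hm'mem hmm'
  have hNak : Submodule.span (PowerSeries k) (Set.range b') = ⊤ :=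
    eq_top_iff.mpr (Submodule.le_of_le_smul_of_le_jacobson_bot Module.Finite.fg_top hXjac hle)
  -- V is spanned over Ω by the images of b'
  let f : M →ₗ[PowerSeries k] TensorProduct (PowerSeries k) Ω M :=
    TensorProduct.mk (PowerSeries k) Ω M 1
  have hspanV : Submodule.span Ω (Set.range (f ∘ b')) = ⊤ := by
    rw [eq_top_iff]
    rintro v -
    have hv : v ∈ Submodule.span (PowerSeries k)
        {t : TensorProduct (PowerSeries k) Ω M | ∃ x y, x ⊗ₜ y = t} := by
      rw [TensorProduct.span_tmul_eq_top]; trivial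
    have key : Submodule.span (PowerSeries k)
        {t : TensorProduct (PowerSeries k) Ω M | ∃ x y, x ⊗ₜ y = t} ≤
        (Submodule.span Ω (Set.range (f ∘ b'))).restrictScalars (PowerSeries k) := by
      rw [Submodule.span_le]
      rintro _ ⟨x, y, rfl⟩
      have h1 : f y ∈ (Submodule.span Ω (Set.range (f ∘ b'))).restrictScalars (PowerSeries k) := by
        have hy : y ∈ Submodule.span (PowerSeries k) (Set.range b') := by
          rw [hNak]; trivial
        refine Submodule.span_induction ?_ ?_ ?_ ?_ hy
        · rintro _ ⟨i, rfl⟩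
          exact Submodule.subset_span ⟨i, rfl⟩
        · rw [map_zero]; exact Submodule.zero_mem _
        · intro a c _ _ ha hc
          rw [map_add]; exact Submodule.add_mem _ ha hc
        · intro r a _ ha
          rw [map_smul]; exact Submodule.smul_mem _ _ ha
      have h2 : (x ⊗ₜ[PowerSeries k] y : TensorProduct (PowerSeries k) Ω M) = x • f y := by
        show x ⊗ₜ[PowerSeries k] y = x • ((1 : Ω) ⊗ₜ[PowerSeries k] y)
        rw [TensorProduct.smul_tmul', smul_eq_mul, mul_one]
      rw [h2]
      exact Submodule.smul_mem _ x h1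
    exact key hv
  have hfinV : Module.Finite Ω (TensorProduct (PowerSeries k) Ω M) :=
    ⟨hspanV ▸ Submodule.fg_span (Set.finite_range _)⟩
  have hrankV : Module.finrank Ω (TensorProduct (PowerSeries k) Ω M) ≤ d := by
    simpa using finrank_le_of_span_eq_top hspanV
  -- the fixed points
  set W := frobeniusFixedPoints (Ω := Ω) ψ hadd hsmul with hW
  have hcard : ∀ s : Finset W, (LinearIndependent (ZMod p) fun i : s => (i : W)) →
      s.card ≤ d := by
    intro s hs
    set w : s → TensorProduct (PowerSeries k) Ω M := fun i => ((i : W) : _) with hw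
    have hfixw : ∀ i : s, ψ (w i) = w i := fun i => (i : W).2
    have hsV : LinearIndependent (ZMod p) w := by
      have := hs.map' W.subtype (Submodule.ker_subtype W)
      exact this
    have hpfuniv : ∀ g : s → Ω, (∀ i ∈ Finset.univ, g i ^ p = g i) →
        ∑ i ∈ Finset.univ, g i • w i = 0 → ∀ i ∈ (Finset.univ : Finset s), g i = 0 := by
      intro g hg hrel i _
      choose z hz using fun j : s => exists_zmod_eq_of_pow_eq (hg j (Finset.mem_univ j))
      have hVrel : ∑ j, z j • w j = (0 : TensorProduct (PowerSeries k) Ω M) := by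
        have : ∀ j : s, z j • w j = g j • w j := by
          intro j
          rw [← hz j, IsScalarTower.algebraMap_smul]
        rw [Finset.sum_congr rfl fun j _ => this j]
        exact hrel
      have hz0 := Fintype.linearIndependent_iff.mp hsV z (by
        rw [← hrel]
        refine Finset.sum_congr rfl fun j _ => ?_
        rw [← hz j]
        exact (@algebraMap_smul (ZMod p) _ Ω _ _ _ _ _ ‹Module (ZMod p) (TensorProduct (PowerSeries k) Ω M)›
          inferInstance (z j) (w j)).symm) i
      rw [← hz i, hz0, map_zero]
    have hliΩ : LinearIndependent Ω w := by
      rw [Fintype.linearIndependent_iff]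
      intro g hrel i
      exact frobenius_fixed_key ψ hadd hsmul w hfixw Finset.univ hpfuniv g hrel i
        (Finset.mem_univ i)
    calc s.card = Fintype.card s := (Fintype.card_coe s).symm
      _ ≤ Module.finrank Ω (TensorProduct (PowerSeries k) Ω M) :=
          hliΩ.fintype_card_le_finrank
      _ ≤ d := hrankV
  have hrankW : Module.rank (ZMod p) W ≤ (d : Cardinal) := rank_le hcard
  have hfinW : FiniteDimensional (ZMod p) W :=
    Module.rank_lt_aleph0_iff.mp (lt_of_le_of_lt hrankW (Cardinal.nat_lt_aleph0 d))
  exact ⟨hfinW, Module.finrank_le_of_rank_le hrankW⟩
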